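/- Let R be a commutative Noetherian ring, G and M finitely generated R-modules, and n ≥ 0. With th^k(G) the filtration of the thick closure of G (th^1(G) = add(G), and th^k(G) consisting of direct summands of one term of a short exact sequence whose other two terms lie in th^{k−1}(G)), if M ∈ th^{n+1}(G) then an n-th syzygy Ω^n_R(M) belongs to |C|_{2^n}, where C = R ⊕ ⊕_{i=0}^{2n} Ω^i_R(G) and |C|_m denotes the m-fold extension closure of add(C). -/

import Mathlib

universe u

variable (R : Type u) [CommRing R]

/-- `M` is a direct summand of `N`. -/
def DirectSummand (M N : ModuleCat.{u} R) : Prop :=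
  ∃ (s : M →ₗ[R] N) (r : N →ₗ[R] M), r ∘ₗ s = LinearMap.id

/-- `M ∈ add G` : `M` is a direct summand of a finite direct sum of copies of `G`. -/
def InAdd (G M : ModuleCat.{u} R) : Prop :=
  ∃ k : ℕ, DirectSummand R M (ModuleCat.of R (Fin k → G))

/-- `ExtClos R G n M` means `M ∈ |G|ₙ`: `|G|₀` consists of zero modules, `|G|₁ = add G`,
and for `n ≥ 2`, `M ∈ |G|ₙ` iff there is a short exact sequence `0 → Y → M ⊕ W → X → 0`
with one of `X, Y` in `|G|ₙ₋₁` and the other in `|G|₁`. -/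
def ExtClos (G : ModuleCat.{u} R) : ℕ → ModuleCat.{u} R → Prop
  | 0, M => Subsingleton M
  | 1, M => InAdd R G M
  | n + 2, M => ∃ (W X Y : ModuleCat.{u} R) (i : Y →ₗ[R] M × W)
      (p : (M × W : Type u) →ₗ[R] X),
      Function.Injective i ∧ Function.Surjective p ∧
      LinearMap.range i = LinearMap.ker p ∧
      ((ExtClos G (n + 1) Y ∧ InAdd R G X) ∨ (InAdd R G Y ∧ ExtClos G (n + 1) X))

/-- `IsSyzygy R n K M` : `K` is an `n`-th syzygy of `M` along finite free resolutions
(`Ω⁰ M = M`). -/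
def IsSyzygy : ℕ → ModuleCat.{u} R → ModuleCat.{u} R → Prop
  | 0, K, M => Nonempty (K ≃ₗ[R] M)
  | n + 1, K, M => ∃ (k : ℕ) (f : (Fin k → R) →ₗ[R] M), Function.Surjective f ∧
      IsSyzygy n K (ModuleCat.of R (LinearMap.ker f))

/-- A thick subcategory of `mod R`: a full additive subcategory (containing the zero modules
and closed under finite direct sums) closed under direct summands and satisfying the
two-out-of-three property for short exact sequences. -/
def IsThick (S : Set (ModuleCat.{u} R)) : Prop :=
  (∀ M : ModuleCat.{u} R, Subsingleton M → M ∈ S) ∧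
  (∀ M N : ModuleCat.{u} R, M ∈ S → N ∈ S → ModuleCat.of R (↥M × ↥N) ∈ S) ∧
  (∀ M N : ModuleCat.{u} R, N ∈ S → DirectSummand R M N → M ∈ S) ∧
  (∀ (A B C : ModuleCat.{u} R) (f : A →ₗ[R] B) (g : B →ₗ[R] C),
    Function.Injective f → Function.Surjective g →
      LinearMap.range f = LinearMap.ker g →
      ((A ∈ S → B ∈ S → C ∈ S) ∧ (A ∈ S → C ∈ S → B ∈ S) ∧ (B ∈ S → C ∈ S → A ∈ S)))

/-- `Th R G n M` means `M ∈ thⁿ(G)`: `th¹(G) = add G`, and `M ∈ thⁿ(G)` for `n ≥ 2` iff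
there is a short exact sequence `0 → A → B → C → 0` with two of `A, B, C` in `thⁿ⁻¹(G)` and
`M` a direct summand of the third. -/
def Th (G : ModuleCat.{u} R) : ℕ → ModuleCat.{u} R → Prop
  | 0, M => Subsingleton M
  | 1, M => InAdd R G M
  | n + 2, M => ∃ (A B C : ModuleCat.{u} R) (f : A →ₗ[R] B) (g : B →ₗ[R] C),
      Function.Injective f ∧ Function.Surjective g ∧
      LinearMap.range f = LinearMap.ker g ∧
      ((Th G (n + 1) A ∧ Th G (n + 1) B ∧ DirectSummand R M C) ∨
       (Th G (n + 1) A ∧ Th G (n + 1) C ∧ DirectSummand R M B) ∨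
       (Th G (n + 1) B ∧ Th G (n + 1) C ∧ DirectSummand R M A))
section Aux
variable {R : Type u} [CommRing R]

/-- zero module -/
abbrev Zed (R : Type u) [CommRing R] : ModuleCat.{u} R := ModuleCat.of R (Fin 0 → R)

abbrev Fr (R : Type u) [CommRing R] (k : ℕ) : ModuleCat.{u} R := ModuleCat.of R (Fin k → R)

theorem ds_refl (M : ModuleCat.{u} R) : DirectSummand R M M := ⟨LinearMap.id, LinearMap.id, rfl⟩

theorem ds_of_equiv {M N : ModuleCat.{u} R} (e : M ≃ₗ[R] N) : DirectSummand R M N :=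
  ⟨e.toLinearMap, e.symm.toLinearMap, by ext x; simp⟩

theorem ds_trans {M N P : ModuleCat.{u} R} (h1 : DirectSummand R M N) (h2 : DirectSummand R N P) :
    DirectSummand R M P := by
  obtain ⟨s1, r1, hr1⟩ := h1; obtain ⟨s2, r2, hr2⟩ := h2
  refine ⟨s2 ∘ₗ s1, r1 ∘ₗ r2, ?_⟩
  ext x
  have h2' := LinearMap.congr_fun hr2 (s1 x)
  have h1' := LinearMap.congr_fun hr1 x
  simp only [LinearMap.comp_apply, LinearMap.id_apply] at *
  rw [h2', h1']

theorem ds_prod_left (M N : ModuleCat.{u} R) :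
    DirectSummand R M (ModuleCat.of R (↥M × ↥N)) :=
  ⟨LinearMap.inl R M N, LinearMap.fst R M N, by ext x; rfl⟩

theorem ds_prod_right (M N : ModuleCat.{u} R) :
    DirectSummand R N (ModuleCat.of R (↥M × ↥N)) :=
  ⟨LinearMap.inr R M N, LinearMap.snd R M N, by ext x; rfl⟩

theorem ds_prod_map {M N M' N' : ModuleCat.{u} R} (h1 : DirectSummand R M M')
    (h2 : DirectSummand R N N') :
    DirectSummand R (ModuleCat.of R (↥M × ↥N)) (ModuleCat.of R (↥M' × ↥N')) := by
  obtain ⟨s1, r1, hr1⟩ := h1; obtain ⟨s2, r2, hr2⟩ := h2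
  refine ⟨LinearMap.prodMap s1 s2, LinearMap.prodMap r1 r2, LinearMap.ext fun x => ?_⟩
  have h1' := LinearMap.congr_fun hr1 x.1
  have h2' := LinearMap.congr_fun hr2 x.2
  simp only [LinearMap.comp_apply, LinearMap.id_apply] at *
  exact Prod.ext h1' h2'

theorem ds_pi_map {m : ℕ} {M N : Fin m → ModuleCat.{u} R}
    (h : ∀ i, DirectSummand R (M i) (N i)) :
    DirectSummand R (ModuleCat.of R ((i : Fin m) → M i)) (ModuleCat.of R ((i : Fin m) → N i)) := by
  choose s r hr using h
  refine ⟨LinearMap.pi (fun i => s i ∘ₗ LinearMap.proj i),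
    LinearMap.pi (fun i => r i ∘ₗ LinearMap.proj i), ?_⟩
  refine LinearMap.ext fun x => funext fun i => ?_
  have := LinearMap.congr_fun (hr i) (x i)
  simp only [LinearMap.comp_apply, LinearMap.id_apply] at *
  simpa using this

/-- A subsingleton module is a direct summand of anything. -/
theorem ds_of_subsingleton {M : ModuleCat.{u} R} (N : ModuleCat.{u} R) (h : Subsingleton M) :
    DirectSummand R M N :=
  ⟨0, 0, by ext x; exact Subsingleton.elim _ _⟩

/-- splitting: if `r ∘ s = id` then `N ≃ M × ker r`. -/
noncomputable def splitEquiv {M N : ModuleCat.{u} R} (s : M →ₗ[R] N) (r : N →ₗ[R] M)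
    (h : r ∘ₗ s = LinearMap.id) : N ≃ₗ[R] (↥M × ↥(LinearMap.ker r)) where
  toFun n := (r n, ⟨n - s (r n), by
    have := LinearMap.congr_fun h (r n)
    simp only [LinearMap.comp_apply, LinearMap.id_apply] at this
    simp [LinearMap.mem_ker, this]⟩)
  invFun p := s p.1 + p.2.1
  left_inv n := by simp
  right_inv p := by
    have hk := p.2.2
    rw [LinearMap.mem_ker] at hk
    have hs := LinearMap.congr_fun h p.1
    simp only [LinearMap.comp_apply, LinearMap.id_apply] at hs
    ext
    · simp [hs, hk]
    · simp [hs, hk]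
  map_add' x y := by
    ext
    · simp
    · simp; abel
  map_smul' c x := by
    ext
    · simp
    · simp [smul_sub]

end Aux
section Aux2
variable {R : Type u} [CommRing R]

/-- `(Fin a → X) × (Fin b → X) ≃ (Fin (a+b) → X)` -/
noncomputable def frAppend (X : Type u) [AddCommGroup X] [Module R X] (a b : ℕ) :
    ((Fin a → X) × (Fin b → X)) ≃ₗ[R] (Fin (a + b) → X) :=
  (LinearEquiv.sumArrowLequivProdArrow (Fin a) (Fin b) R X).symm ≪≫ₗ
    (LinearEquiv.funCongrLeft R X finSumFinEquiv.symm)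

theorem inAdd_of_ds {D M N : ModuleCat.{u} R} (h : DirectSummand R M N) (hN : InAdd R D N) :
    InAdd R D M := by
  obtain ⟨k, hk⟩ := hN
  exact ⟨k, ds_trans h hk⟩

theorem inAdd_of_equiv {D M N : ModuleCat.{u} R} (e : M ≃ₗ[R] N) (hN : InAdd R D N) :
    InAdd R D M := inAdd_of_ds (ds_of_equiv e) hN

theorem inAdd_self (D : ModuleCat.{u} R) : InAdd R D D :=
  ⟨1, ds_of_equiv (LinearEquiv.funUnique (Fin 1) R D).symm⟩

theorem inAdd_zero {D M : ModuleCat.{u} R} (h : Subsingleton M) : InAdd R D M :=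
  ⟨0, ds_of_subsingleton _ h⟩

theorem inAdd_mono {D G M : ModuleCat.{u} R} (hG : InAdd R D G) (hM : InAdd R G M) :
    InAdd R D M := by
  obtain ⟨k, hk⟩ := hM
  obtain ⟨t, ht⟩ := hG
  refine ⟨k * t, ds_trans hk (ds_trans (ds_pi_map (M := fun _ : Fin k => G)
    (N := fun _ : Fin k => ModuleCat.of R (Fin t → D)) fun _ => ht) ?_)⟩
  refine ds_of_equiv ?_
  exact (LinearEquiv.curry R D (Fin k) (Fin t)).symm ≪≫ₗ
    (LinearEquiv.funCongrLeft R D finProdFinEquiv.symm)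

theorem inAdd_prod {D M N : ModuleCat.{u} R} (hM : InAdd R D M) (hN : InAdd R D N) :
    InAdd R D (ModuleCat.of R (↥M × ↥N)) := by
  obtain ⟨a, ha⟩ := hM
  obtain ⟨b, hb⟩ := hN
  exact ⟨a + b, ds_trans (ds_prod_map ha hb) (ds_of_equiv (frAppend (↥D) a b))⟩

/-- free modules belong to `add D` whenever `R` is a summand of `D`. -/
theorem inAdd_free {D : ModuleCat.{u} R} (hR : DirectSummand R (ModuleCat.of R R) D) (k : ℕ) :
    InAdd R D (Fr R k) :=
  ⟨k, ds_pi_map (M := fun _ : Fin k => ModuleCat.of R R) (N := fun _ : Fin k => D) fun _ => hR⟩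

/-- Short exact sequence, as plain data. -/
def SES (A B C : ModuleCat.{u} R) : Prop :=
  ∃ (i : A →ₗ[R] B) (p : B →ₗ[R] C), Function.Injective i ∧ Function.Surjective p ∧
    LinearMap.range i = LinearMap.ker p

theorem ses_congr {A B C A' B' C' : ModuleCat.{u} R} (eA : A ≃ₗ[R] A') (eB : B ≃ₗ[R] B')
    (eC : C ≃ₗ[R] C') (h : SES A B C) : SES A' B' C' := by
  obtain ⟨i, p, hi, hp, hk⟩ := h
  refine ⟨eB.toLinearMap ∘ₗ i ∘ₗ eA.symm.toLinearMap,
    eC.toLinearMap ∘ₗ p ∘ₗ eB.symm.toLinearMap, ?_, ?_, ?_⟩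
  · intro x y hxy
    simp only [LinearMap.comp_apply, LinearEquiv.coe_coe] at hxy
    have := hi (eB.injective hxy)
    exact eA.symm.injective this
  · intro z
    obtain ⟨b, hb⟩ := hp (eC.symm z)
    exact ⟨eB b, by simp [hb]⟩
  · ext b'
    simp only [LinearMap.mem_range, LinearMap.mem_ker, LinearMap.comp_apply,
      LinearEquiv.coe_coe, EmbeddingLike.map_eq_zero_iff]
    rw [← LinearMap.mem_ker, ← hk]
    constructor
    · rintro ⟨a', rfl⟩
      exact ⟨eA.symm a', by simp⟩
    · rintro ⟨a, ha⟩
      exact ⟨eA a, by simp [ha]⟩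

theorem SES.subsingleton_left {A B C : ModuleCat.{u} R} (h : SES A B C) (hA : Subsingleton A) :
    Nonempty (↥B ≃ₗ[R] ↥C) := by
  obtain ⟨i, p, hi, hp, hk⟩ := h
  refine ⟨LinearEquiv.ofBijective p ⟨?_, hp⟩⟩
  rw [← LinearMap.ker_eq_bot, ← hk]
  ext x
  simp only [LinearMap.mem_range, Submodule.mem_bot]
  constructor
  · rintro ⟨a, rfl⟩
    rw [Subsingleton.elim a 0, map_zero]
  · rintro rfl
    exact ⟨0, map_zero i⟩

theorem SES.subsingleton_right {A B C : ModuleCat.{u} R} (h : SES A B C) (hC : Subsingleton C) :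
    Nonempty (↥A ≃ₗ[R] ↥B) := by
  obtain ⟨i, p, hi, hp, hk⟩ := h
  refine ⟨LinearEquiv.ofBijective i ⟨hi, ?_⟩⟩
  rw [← LinearMap.range_eq_top, hk]
  ext x
  simp only [LinearMap.mem_ker, Submodule.mem_top, iff_true]
  exact Subsingleton.elim _ _

/-- `0 → A → A × F → F → 0`. -/
theorem ses_inl (A F : ModuleCat.{u} R) : SES A (ModuleCat.of R (↥A × ↥F)) F :=
  ⟨LinearMap.inl R A F, LinearMap.snd R A F, LinearMap.inl_injective,
    Prod.snd_surjective, LinearMap.range_inl R A F⟩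

/-- product of a ses with a module `F` (added to sub and middle). -/
theorem ses_prod_left {A B C : ModuleCat.{u} R} (F : ModuleCat.{u} R) (h : SES A B C) :
    SES (ModuleCat.of R (↥A × ↥F)) (ModuleCat.of R (↥B × ↥F)) C := by
  obtain ⟨i, p, hi, hp, hk⟩ := h
  refine ⟨LinearMap.prodMap i LinearMap.id, p ∘ₗ LinearMap.fst R B F, ?_, ?_, ?_⟩
  · intro x y hxy
    rw [Prod.ext_iff] at hxy ⊢
    exact ⟨hi hxy.1, hxy.2⟩
  · intro c
    obtain ⟨b, hb⟩ := hp c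
    exact ⟨(b, 0), hb⟩
  · ext x
    simp only [LinearMap.mem_range, LinearMap.mem_ker, LinearMap.comp_apply, LinearMap.fst_apply]
    rw [← LinearMap.mem_ker, ← hk]
    constructor
    · rintro ⟨⟨a, f⟩, rfl⟩
      exact ⟨a, rfl⟩
    · rintro ⟨a, ha⟩
      exact ⟨(a, x.2), Prod.ext ha rfl⟩

end Aux2
section Aux3
variable {R : Type u} [CommRing R]

theorem extClos_two_iff {D M : ModuleCat.{u} R} {m : ℕ} :
    ExtClos R D (m + 2) M ↔ ∃ W X Y : ModuleCat.{u} R,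
      SES Y (ModuleCat.of R (↥M × ↥W)) X ∧
      ((ExtClos R D (m + 1) Y ∧ InAdd R D X) ∨ (InAdd R D Y ∧ ExtClos R D (m + 1) X)) := by
  constructor
  · rintro ⟨W, X, Y, i, p, h1, h2, h3, h4⟩
    exact ⟨W, X, Y, ⟨i, p, h1, h2, h3⟩, h4⟩
  · rintro ⟨W, X, Y, ⟨i, p, h1, h2, h3⟩, h4⟩
    exact ⟨W, X, Y, i, p, h1, h2, h3, h4⟩

theorem extClos_congr {D M M' : ModuleCat.{u} R} {m : ℕ} (e : M ≃ₗ[R] M')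
    (h : ExtClos R D m M) : ExtClos R D m M' := by
  match m with
  | 0 => exact (Equiv.subsingleton_congr e.toEquiv).mp h
  | 1 => exact inAdd_of_equiv e.symm h
  | (m + 2) =>
    rw [extClos_two_iff] at h ⊢
    obtain ⟨W, X, Y, hs, hd⟩ := h
    exact ⟨W, X, Y, ses_congr (LinearEquiv.refl R Y)
      (LinearEquiv.prodCongr e (LinearEquiv.refl R ↥W)) (LinearEquiv.refl R X) hs, hd⟩

/-- `E ≃ E × 0`. -/
def prodZed (E : ModuleCat.{u} R) : ↥E ≃ₗ[R] (↥E × (Fin 0 → R)) where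
  toFun e := (e, 0)
  invFun p := p.1
  left_inv _ := rfl
  right_inv p := Prod.ext rfl (Subsingleton.elim _ _)
  map_add' _ _ := Prod.ext rfl (Subsingleton.elim _ _)
  map_smul' _ _ := Prod.ext rfl (Subsingleton.elim _ _)

theorem extClos_of_ses_right {D Y E X : ModuleCat.{u} R} {a : ℕ}
    (hY : ExtClos R D a Y) (hX : InAdd R D X) (hs : SES Y E X) :
    ExtClos R D (a + 1) E := by
  match a with
  | 0 =>
    have hsub : Subsingleton ↥Y := hY
    obtain ⟨e⟩ := hs.subsingleton_left hsub
    exact inAdd_of_equiv e hX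
  | (a + 1) =>
    rw [extClos_two_iff]
    refine ⟨Zed R, X, Y, ses_congr (LinearEquiv.refl R Y) (prodZed E)
      (LinearEquiv.refl R X) hs, Or.inl ⟨hY, hX⟩⟩

theorem extClos_succ {D M : ModuleCat.{u} R} {m : ℕ} (h : ExtClos R D m M) :
    ExtClos R D (m + 1) M := by
  match m with
  | 0 => exact inAdd_zero h
  | (m + 1) =>
    refine extClos_of_ses_right (X := Zed R) h (inAdd_zero inferInstance)
      ⟨LinearMap.id, 0, fun x y h => h, fun x => ⟨0, Subsingleton.elim _ _⟩, ?_⟩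
    rw [LinearMap.ker_zero, LinearMap.range_id]

theorem extClos_mono_idx {D M : ModuleCat.{u} R} {a b : ℕ} (hab : a ≤ b)
    (h : ExtClos R D a M) : ExtClos R D b M := by
  induction hab with
  | refl => exact h
  | step _ ih => exact extClos_succ ih

theorem extClos_zero {D M : ModuleCat.{u} R} (m : ℕ) (h : Subsingleton M) :
    ExtClos R D m M :=
  extClos_mono_idx (Nat.zero_le m) h

theorem extClos_of_inAdd {D M : ModuleCat.{u} R} {m : ℕ} (hm : 1 ≤ m) (h : InAdd R D M) :
    ExtClos R D m M :=
  extClos_mono_idx hm h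

theorem extClos_summand {D M N : ModuleCat.{u} R} {m : ℕ} (hd : DirectSummand R N M)
    (h : ExtClos R D m M) : ExtClos R D m N := by
  match m with
  | 0 =>
    obtain ⟨s, r, hrs⟩ := hd
    have hsinj : Function.Injective s := by
      intro x y hxy
      have h1 := LinearMap.congr_fun hrs x
      have h2 := LinearMap.congr_fun hrs y
      simp only [LinearMap.comp_apply, LinearMap.id_apply] at h1 h2
      rw [← h1, ← h2, hxy]
    have hsub : Subsingleton ↥M := h
    exact ⟨fun a b => hsinj (Subsingleton.elim _ _)⟩
  | 1 => exact inAdd_of_ds hd h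
  | (m + 2) =>
    obtain ⟨s, r, hrs⟩ := hd
    rw [extClos_two_iff] at h ⊢
    obtain ⟨W, X, Y, hs, hdisj⟩ := h
    refine ⟨ModuleCat.of R (↥(ModuleCat.of R (LinearMap.ker r)) × ↥W), X, Y,
      ses_congr (LinearEquiv.refl R Y) ?_ (LinearEquiv.refl R X) hs, hdisj⟩
    exact (LinearEquiv.prodCongr (splitEquiv s r hrs) (LinearEquiv.refl R ↥W)) ≪≫ₗ
      (LinearEquiv.prodAssoc R ↥N ↥(LinearMap.ker r) ↥W)

/-- rotate `(A × B) × C ≃ (A × C) × B`. -/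
def prodRotate (A B C : Type u) [AddCommGroup A] [AddCommGroup B] [AddCommGroup C]
    [Module R A] [Module R B] [Module R C] : ((A × B) × C) ≃ₗ[R] ((A × C) × B) where
  toFun x := ((x.1.1, x.2), x.1.2)
  invFun x := ((x.1.1, x.2), x.1.2)
  left_inv _ := rfl
  right_inv _ := rfl
  map_add' _ _ := rfl
  map_smul' _ _ := rfl

theorem extClos_prod_inAdd {D : ModuleCat.{u} R} :
    ∀ (m : ℕ) {M F : ModuleCat.{u} R}, ExtClos R D (m + 1) M → InAdd R D F →
      ExtClos R D (m + 1) (ModuleCat.of R (↥M × ↥F)) := by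
  intro m
  induction m with
  | zero => exact fun hM hF => inAdd_prod hM hF
  | succ m IH =>
    intro M F hM hF
    rw [extClos_two_iff] at hM ⊢
    obtain ⟨W, X, Y, hs, hdisj⟩ := hM
    refine ⟨W, X, ModuleCat.of R (↥Y × ↥F),
      ses_congr (LinearEquiv.refl R _) (prodRotate ↥M ↥W ↥F) (LinearEquiv.refl R X)
        (ses_prod_left F hs), ?_⟩
    rcases hdisj with ⟨hY, hX⟩ | ⟨hY, hX⟩
    · exact Or.inl ⟨IH hY hF, hX⟩
    · exact Or.inr ⟨inAdd_prod hY hF, hX⟩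

/-- Pullback of a surjection along the sub of another ses. -/
theorem ses_pullback {Y B T Y'' X'' : ModuleCat.{u} R}
    (h1 : SES Y B T) (h2 : SES Y'' T X'') :
    ∃ E'' : ModuleCat.{u} R, SES Y E'' Y'' ∧ SES E'' B X'' := by
  obtain ⟨iY, pB, hiY, hpB, hk1⟩ := h1
  obtain ⟨i2, p2, hi2, hp2, hk2⟩ := h2
  set q : ↥B →ₗ[R] ↥X'' := p2 ∘ₗ pB with hq
  set K := LinearMap.ker q with hK
  have hsub : ∀ y : ↥Y, iY y ∈ K := by
    intro y
    have h0 : iY y ∈ LinearMap.ker pB := by rw [← hk1]; exact ⟨y, rfl⟩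
    rw [LinearMap.mem_ker] at h0
    show q (iY y) = 0
    rw [hq, LinearMap.comp_apply, h0, map_zero]
  let j : ↥Y →ₗ[R] K := LinearMap.codRestrict K iY hsub
  have hmem : ∀ e : K, pB (e : ↥B) ∈ LinearMap.range i2 := by
    intro e
    rw [hk2, LinearMap.mem_ker]
    exact e.2
  set eqv := LinearEquiv.ofInjective i2 hi2 with heqv
  set cod := LinearMap.codRestrict (LinearMap.range i2) (pB ∘ₗ K.subtype) hmem with hcod
  let rmap : K →ₗ[R] ↥Y'' := eqv.symm.toLinearMap ∘ₗ cod
  have hrmap : ∀ e : K, i2 (rmap e) = pB (e : ↥B) := by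
    intro e
    have hB : (↑(eqv (rmap e)) : ↥T) = i2 (rmap e) := LinearEquiv.ofInjective_apply i2 (rmap e)
    have hA : (↑(eqv (rmap e)) : ↥T) = ((cod e : ↥(LinearMap.range i2)) : ↥T) :=
      congrArg Subtype.val (eqv.apply_symm_apply (cod e))
    have hC : ((cod e : ↥(LinearMap.range i2)) : ↥T) = pB (e : ↥B) := rfl
    exact hB.symm.trans (hA.trans hC)
  have hjinj : Function.Injective j := fun x y hxy => hiY (congrArg Subtype.val hxy)
  have hrsurj : Function.Surjective rmap := by
    intro y''
    obtain ⟨b, hb⟩ := hpB (i2 y'')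
    have hbq : b ∈ K := by
      show q b = 0
      rw [hq, LinearMap.comp_apply, hb, ← LinearMap.mem_ker, ← hk2]
      exact ⟨y'', rfl⟩
    exact ⟨⟨b, hbq⟩, hi2 ((hrmap ⟨b, hbq⟩).trans hb)⟩
  have hrk : LinearMap.range j = LinearMap.ker rmap := by
    ext e
    simp only [LinearMap.mem_range, LinearMap.mem_ker]
    constructor
    · rintro ⟨y, rfl⟩
      apply hi2
      rw [map_zero]
      have h0 : iY y ∈ LinearMap.ker pB := by rw [← hk1]; exact ⟨y, rfl⟩
      exact (hrmap (j y)).trans h0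
    · intro he
      have hpb : pB (e : ↥B) = 0 := by rw [← hrmap e, he, map_zero]
      have hr : (e : ↥B) ∈ LinearMap.range iY := by rw [hk1]; exact hpb
      obtain ⟨y, hy⟩ := hr
      exact ⟨y, Subtype.ext hy⟩
  exact ⟨ModuleCat.of R K, ⟨j, rmap, hjinj, hrsurj, hrk⟩, K.subtype, q, Subtype.val_injective,
    hp2.comp hpB, Submodule.range_subtype K⟩

theorem extClos_glue {D : ModuleCat.{u} R} :
    ∀ (b : ℕ) {a : ℕ} {Y E X : ModuleCat.{u} R}, SES Y E X → ExtClos R D a Y →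
      ExtClos R D b X → ExtClos R D (a + b) E := by
  intro b
  induction b with
  | zero =>
    intro a Y E X hs hY hX
    obtain ⟨e⟩ := hs.subsingleton_right hX
    exact extClos_congr e hY
  | succ n IH =>
    match n with
    | 0 =>
      intro a Y E X hs hY hX
      exact extClos_of_ses_right hY hX hs
    | (m + 1) =>
      intro a Y E X hs hY hX
      rw [extClos_two_iff] at hX
      obtain ⟨W', X'', Y'', hs2, hdisj⟩ := hX
      -- ses Y → E × W' → X × W'
      have hsE : SES Y (ModuleCat.of R (↥E × ↥W')) (ModuleCat.of R (↥X × ↥W')) := by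
        obtain ⟨i, p, hi, hp, hk⟩ := hs
        refine ⟨LinearMap.inl R ↥E ↥W' ∘ₗ i, LinearMap.prodMap p LinearMap.id, ?_, ?_, ?_⟩
        · exact LinearMap.inl_injective.comp hi
        · intro c
          obtain ⟨e, he⟩ := hp c.1
          exact ⟨(e, c.2), Prod.ext he rfl⟩
        · ext x
          simp only [LinearMap.mem_range, LinearMap.mem_ker, LinearMap.comp_apply]
          constructor
          · rintro ⟨y, rfl⟩
            have : i y ∈ LinearMap.ker p := by rw [← hk]; exact ⟨y, rfl⟩
            rw [LinearMap.mem_ker] at this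
            exact Prod.ext this rfl
          · intro hx
            rw [Prod.ext_iff] at hx
            have h1 : p x.1 = 0 := hx.1
            have h2 : x.2 = 0 := hx.2
            have : x.1 ∈ LinearMap.range i := by rw [hk]; exact h1
            obtain ⟨y, hy⟩ := this
            exact ⟨y, Prod.ext (by simpa using hy) (by simpa using h2.symm)⟩
      obtain ⟨E'', hsa, hsb⟩ := ses_pullback hsE hs2
      have hE : DirectSummand R E (ModuleCat.of R (↥E × ↥W')) := ds_prod_left E W'
      rcases hdisj with ⟨hY'', hX''⟩ | ⟨hY'', hX''⟩
      · have h1 : ExtClos R D (a + (m + 1)) E'' := IH hsa hY hY''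
        have h2 : ExtClos R D (a + (m + 1) + 1) (ModuleCat.of R (↥E × ↥W')) :=
          extClos_of_ses_right h1 hX'' hsb
        exact extClos_summand hE h2
      · have h1 : ExtClos R D (a + 1) E'' := extClos_of_ses_right hY hY'' hsa
        have h2 : ExtClos R D (a + 1 + (m + 1)) (ModuleCat.of R (↥E × ↥W')) :=
          IH hsb h1 hX''
        have := extClos_summand hE h2
        have harith : a + 1 + (m + 1) = a + (m + 1 + 1) := by omega
        rwa [harith] at this

/-- monotonicity in the "generator". -/
theorem extClos_mono_gen {D D' : ModuleCat.{u} R} (hD : InAdd R D' D) :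
    ∀ (m : ℕ) {M : ModuleCat.{u} R}, ExtClos R D m M → ExtClos R D' m M := by
  intro m
  induction m using Nat.strong_induction_on with
  | _ m IH =>
    intro M h
    match m with
    | 0 => exact h
    | 1 => exact inAdd_mono hD h
    | (m + 2) =>
      rw [extClos_two_iff] at h ⊢
      obtain ⟨W, X, Y, hs, hdisj⟩ := h
      refine ⟨W, X, Y, hs, ?_⟩
      rcases hdisj with ⟨hY, hX⟩ | ⟨hY, hX⟩
      · exact Or.inl ⟨IH (m + 1) (by omega) hY, inAdd_mono hD hX⟩
      · exact Or.inr ⟨inAdd_mono hD hY, IH (m + 1) (by omega) hX⟩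

end Aux3
section Aux4
variable {R : Type u} [CommRing R]

theorem free_lift {B C : ModuleCat.{u} R} (g : ↥B →ₗ[R] ↥C) (hg : Function.Surjective g)
    {c : ℕ} (f : (Fin c → R) →ₗ[R] ↥C) : ∃ h : (Fin c → R) →ₗ[R] ↥B, g ∘ₗ h = f :=
  Module.projective_lifting_property g f hg

theorem isSyzygy_congr_left : ∀ {n : ℕ} {K K' M : ModuleCat.{u} R}, (↥K ≃ₗ[R] ↥K') →
    IsSyzygy R n K' M → IsSyzygy R n K M
  | 0, _, _, _, e, ⟨e'⟩ => ⟨e ≪≫ₗ e'⟩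
  | n + 1, _, _, _, e, ⟨k, f, hf, h⟩ => ⟨k, f, hf, isSyzygy_congr_left e h⟩

theorem isSyzygy_congr_right : ∀ {n : ℕ} {K M M' : ModuleCat.{u} R}, (↥M ≃ₗ[R] ↥M') →
    IsSyzygy R n K M → IsSyzygy R n K M'
  | 0, _, _, _, e, ⟨e'⟩ => ⟨e' ≪≫ₗ e⟩
  | n + 1, K, M, M', e, ⟨k, f, hf, h⟩ => by
    refine ⟨k, e.toLinearMap ∘ₗ f, e.surjective.comp hf, ?_⟩
    have hker : LinearMap.ker (e.toLinearMap ∘ₗ f) = LinearMap.ker f := by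
      rw [LinearMap.ker_comp, LinearEquiv.ker, Submodule.comap_bot]
    rw [hker]
    exact h

theorem isSyzygy_comp : ∀ {b : ℕ} {a : ℕ} {K L M : ModuleCat.{u} R},
    IsSyzygy R a K L → IsSyzygy R b L M → IsSyzygy R (a + b) K M
  | 0, a, K, L, M, hK, ⟨e⟩ => isSyzygy_congr_right e hK
  | b + 1, a, K, L, M, hK, ⟨k, f, hf, h⟩ =>
    ⟨k, f, hf, isSyzygy_comp hK h⟩

/-- equiv between kernels under composition with an equiv. -/
noncomputable def kerCompEquiv {A B C : Type u} [AddCommGroup A] [AddCommGroup B]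
    [AddCommGroup C] [Module R A] [Module R B] [Module R C]
    (e : A ≃ₗ[R] B) (f : B →ₗ[R] C) :
    ↥(LinearMap.ker (f ∘ₗ e.toLinearMap)) ≃ₗ[R] ↥(LinearMap.ker f) where
  toFun x := ⟨e x.1, by
    have h2 : (f ∘ₗ e.toLinearMap) x.1 = 0 := x.2
    simp only [LinearMap.comp_apply, LinearEquiv.coe_coe] at h2
    exact h2⟩
  invFun y := ⟨e.symm y.1, by
    have h2 : f y.1 = 0 := y.2
    simp only [LinearMap.mem_ker, LinearMap.comp_apply, LinearEquiv.coe_coe,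
      LinearEquiv.apply_symm_apply]
    exact h2⟩
  left_inv x := Subtype.ext (by simp)
  right_inv y := Subtype.ext (by simp)
  map_add' x y := Subtype.ext (by simp)
  map_smul' c x := Subtype.ext (by simp)

/-- kernel of a product map. -/
noncomputable def kerProdEquiv {A B C D' : Type u} [AddCommGroup A] [AddCommGroup B]
    [AddCommGroup C] [AddCommGroup D'] [Module R A] [Module R B] [Module R C] [Module R D']
    (f : A →ₗ[R] B) (g : C →ₗ[R] D') :
    ↥(LinearMap.ker (LinearMap.prodMap f g)) ≃ₗ[R]
      (↥(LinearMap.ker f) × ↥(LinearMap.ker g)) where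
  toFun x := (⟨x.1.1, by
      have := x.2
      rw [LinearMap.mem_ker, Prod.ext_iff] at this
      exact this.1⟩, ⟨x.1.2, by
      have := x.2
      rw [LinearMap.mem_ker, Prod.ext_iff] at this
      exact this.2⟩)
  invFun y := ⟨(y.1.1, y.2.1), by
      rw [LinearMap.mem_ker]
      exact Prod.ext y.1.2 y.2.2⟩
  left_inv x := Subtype.ext rfl
  right_inv y := Prod.ext (Subtype.ext rfl) (Subtype.ext rfl)
  map_add' x y := rfl
  map_smul' c x := rfl

/-- kernel of `f ∘ fst`. -/
noncomputable def kerCompFstEquiv {A B C : Type u} [AddCommGroup A] [AddCommGroup B]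
    [AddCommGroup C] [Module R A] [Module R B] [Module R C] (f : A →ₗ[R] B) :
    ↥(LinearMap.ker (f ∘ₗ LinearMap.fst R A C)) ≃ₗ[R] (↥(LinearMap.ker f) × C) where
  toFun x := (⟨x.1.1, x.2⟩, x.1.2)
  invFun y := ⟨(y.1.1, y.2), y.1.2⟩
  left_inv x := Subtype.ext rfl
  right_inv y := Prod.ext (Subtype.ext rfl) rfl
  map_add' x y := rfl
  map_smul' c x := rfl

theorem isSyzygy_of_cover {n k : ℕ} {K M : ModuleCat.{u} R} (f : (Fin k → R) →ₗ[R] ↥M)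
    (hf : Function.Surjective f) (h : IsSyzygy R n K (ModuleCat.of R (LinearMap.ker f))) :
    IsSyzygy R (n + 1) K M := ⟨k, f, hf, h⟩

theorem isSyzygy_self (M : ModuleCat.{u} R) : IsSyzygy R 0 M M := ⟨LinearEquiv.refl R M⟩

/-- a (free) cover of a product of covered modules -/
theorem isSyzygy_prod : ∀ {n : ℕ} {K L M N : ModuleCat.{u} R},
    IsSyzygy R n K M → IsSyzygy R n L N →
    IsSyzygy R n (ModuleCat.of R (↥K × ↥L)) (ModuleCat.of R (↥M × ↥N))
  | 0, K, L, M, N, ⟨e⟩, ⟨e'⟩ => ⟨LinearEquiv.prodCongr e e'⟩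
  | n + 1, K, L, M, N, ⟨k, f, hf, h⟩, ⟨l, g, hg, h'⟩ => by
    refine ⟨k + l, (LinearMap.prodMap f g) ∘ₗ (frAppend (R := R) R k l).symm.toLinearMap,
      ?_, ?_⟩
    · intro x
      obtain ⟨a, ha⟩ := hf x.1
      obtain ⟨b, hb⟩ := hg x.2
      exact ⟨frAppend (R := R) R k l (a, b), by
        simp only [LinearMap.comp_apply, LinearEquiv.coe_coe, LinearEquiv.symm_apply_apply]
        exact Prod.ext ha hb⟩
    · have e2 := kerCompEquiv (R := R) (frAppend (R := R) R k l).symm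
        (LinearMap.prodMap f g)
      have e3 := kerProdEquiv (R := R) f g
      exact isSyzygy_congr_right (e2 ≪≫ₗ e3).symm (isSyzygy_prod h h')

noncomputable def subsingletonLEquiv (A B : Type u) [AddCommGroup A] [AddCommGroup B] [Module R A]
    [Module R B] [Subsingleton A] [Subsingleton B] : A ≃ₗ[R] B where
  toFun _ := 0
  invFun _ := 0
  left_inv x := Subsingleton.elim _ _
  right_inv x := Subsingleton.elim _ _
  map_add' _ _ := Subsingleton.elim _ _
  map_smul' _ _ := Subsingleton.elim _ _

theorem isSyzygy_zed : ∀ (n : ℕ) {M : ModuleCat.{u} R}, Subsingleton ↥M →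
    IsSyzygy R n (Zed R) M
  | 0, M, h => by
    have : Subsingleton (Fin 0 → R) := inferInstance
    exact ⟨subsingletonLEquiv _ _⟩
  | n + 1, M, h => by
    refine ⟨0, 0, fun x => ⟨0, Subsingleton.elim _ _⟩, ?_⟩
    have hsub : Subsingleton ↥(LinearMap.ker (0 : (Fin 0 → R) →ₗ[R] ↥M)) :=
      inferInstance
    exact isSyzygy_zed n hsub

/-- syzygies of finite free modules, with good properties. -/
theorem isSyzygy_free (n c : ℕ) : ∃ Z : ModuleCat.{u} R, IsSyzygy R n Z (Fr R c) ∧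
    (∀ s : ℕ, ∃ t : ℕ, Nonempty ((↥Z × (Fin s → R)) ≃ₗ[R] (Fin t → R))) ∧
    (∀ D : ModuleCat.{u} R, DirectSummand R (ModuleCat.of R R) D → InAdd R D Z) := by
  match n with
  | 0 =>
    refine ⟨Fr R c, isSyzygy_self _, fun s => ⟨c + s, ⟨frAppend R c s⟩⟩,
      fun D hD => inAdd_free hD c⟩
  | (n + 1) =>
    refine ⟨Zed R, ?_, fun s => ⟨s, ⟨(LinearEquiv.prodComm R _ _) ≪≫ₗ (prodZed (Fr R s)).symm⟩⟩,
      fun D _ => inAdd_zero inferInstance⟩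
    refine ⟨c, LinearMap.id, fun x => ⟨x, rfl⟩, ?_⟩
    have hsub : Subsingleton ↥(LinearMap.ker (LinearMap.id : (Fin c → R) →ₗ[R] (Fin c → R))) := by
      rw [LinearMap.ker_id]
      infer_instance
    exact isSyzygy_zed n hsub

theorem module_finite_of_isSyzygy [IsNoetherianRing R] :
    ∀ {n : ℕ} {K M : ModuleCat.{u} R}, IsSyzygy R n K M → Module.Finite R ↥M →
      Module.Finite R ↥K
  | 0, K, M, ⟨e⟩, hM => Module.Finite.equiv e.symm
  | n + 1, K, M, ⟨k, f, hf, h⟩, hM => by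
    have : Module.Finite R ↥(ModuleCat.of R (LinearMap.ker f)) := by
      have : IsNoetherian R (Fin k → R) := inferInstance
      exact Module.Finite.iff_fg.mpr (IsNoetherian.noetherian _)
    exact module_finite_of_isSyzygy h this

theorem exists_syzygy [IsNoetherianRing R] (n : ℕ) (M : ModuleCat.{u} R)
    (hM : Module.Finite R ↥M) : ∃ K : ModuleCat.{u} R, IsSyzygy R n K M := by
  match n with
  | 0 => exact ⟨M, isSyzygy_self M⟩
  | (n + 1) =>
    obtain ⟨k, f, hf⟩ := @Module.Finite.exists_fin' R ↥M _ _ _ hM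
    have hker : Module.Finite R ↥(ModuleCat.of R (LinearMap.ker f)) := by
      have : IsNoetherian R (Fin k → R) := inferInstance
      exact Module.Finite.iff_fg.mpr (IsNoetherian.noetherian _)
    obtain ⟨K, hK⟩ := exists_syzygy n (ModuleCat.of R (LinearMap.ker f)) hker
    exact ⟨K, ⟨k, f, hf, hK⟩⟩

end Aux4
section Aux5
variable {R : Type u} [CommRing R]

theorem free_lift' {B C : Type u} [AddCommGroup B] [AddCommGroup C] [Module R B] [Module R C]
    (g : B →ₗ[R] C) (hg : Function.Surjective g) {c : ℕ} (f : (Fin c → R) →ₗ[R] C) :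
    ∃ h : (Fin c → R) →ₗ[R] B, g ∘ₗ h = f :=
  Module.projective_lifting_property g f hg

theorem splitHalf {Q M : Type u} [AddCommGroup Q] [AddCommGroup M] [Module R Q] [Module R M]
    {a : ℕ} (f : (Fin a → R) →ₗ[R] M) (g : Q →ₗ[R] M) (hg : Function.Surjective g) :
    Nonempty (↥(LinearMap.ker (f.coprod (-g))) ≃ₗ[R]
      ((Fin a → R) × ↥(LinearMap.ker g))) := by
  obtain ⟨l, hl⟩ := free_lift' g hg f
  set φ := f.coprod (-g) with hφ
  have hgl : ∀ x, g (l x) = f x := fun x => LinearMap.congr_fun hl x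
  have hmem : ∀ x : Fin a → R, (LinearMap.id.prod l) x ∈ LinearMap.ker φ := by
    intro x
    simp only [LinearMap.mem_ker, hφ, LinearMap.coprod_apply, LinearMap.prod_apply,
      Function.prod, LinearMap.id_apply, LinearMap.neg_apply, hgl]
    exact add_neg_cancel _
  set s1 : (Fin a → R) →ₗ[R] ↥(LinearMap.ker φ) :=
    LinearMap.codRestrict _ (LinearMap.id.prod l) hmem with hs1
  set π1 : ↥(LinearMap.ker φ) →ₗ[R] (Fin a → R) :=
    (LinearMap.fst R (Fin a → R) Q) ∘ₗ (LinearMap.ker φ).subtype with hπ1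
  have hsplit : π1 ∘ₗ s1 = LinearMap.id := by
    refine LinearMap.ext fun x => ?_
    rfl
  have e1 := splitEquiv (M := ModuleCat.of R (Fin a → R))
    (N := ModuleCat.of R ↥(LinearMap.ker φ)) s1 π1 hsplit
  refine ⟨e1 ≪≫ₗ LinearEquiv.prodCongr (LinearEquiv.refl R (Fin a → R)) ?_⟩
  -- ker π1 ≃ ker g
  refine
    { toFun := fun z => ⟨(z.1.1 : (Fin a → R) × Q).2, ?_⟩
      invFun := fun w => ⟨⟨(0, w.1), ?_⟩, ?_⟩
      left_inv := ?_
      right_inv := ?_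
      map_add' := fun x y => Subtype.ext rfl
      map_smul' := fun c x => Subtype.ext rfl }
  · -- g z.1.1.2 = 0
    have h1 : (z.1.1 : (Fin a → R) × Q).1 = 0 := z.2
    have h2 : f (z.1.1 : (Fin a → R) × Q).1 + -(g (z.1.1 : (Fin a → R) × Q).2) = 0 := z.1.2
    rw [h1, map_zero, zero_add, neg_eq_zero] at h2
    exact h2
  · -- (0, w.1) ∈ ker φ
    have h1 : g w.1 = 0 := w.2
    show f 0 + -(g w.1) = 0
    rw [h1, map_zero, neg_zero, add_zero]
  · -- π1 value is 0
    rfl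
  · intro z
    have h1 : (z.1.1 : (Fin a → R) × Q).1 = 0 := z.2
    exact Subtype.ext (Subtype.ext (Prod.ext h1.symm rfl))
  · intro w
    exact Subtype.ext rfl

noncomputable def kerSwap {P Q M : Type u} [AddCommGroup P] [AddCommGroup Q] [AddCommGroup M]
    [Module R P] [Module R Q] [Module R M] (f : P →ₗ[R] M) (g : Q →ₗ[R] M) :
    ↥(LinearMap.ker (f.coprod (-g))) ≃ₗ[R] ↥(LinearMap.ker (g.coprod (-f))) := by
  have key : ∀ (x : P × Q), f x.1 + -(g x.2) = 0 → g x.2 + -(f x.1) = 0 := by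
    intro x h
    have h2 : f x.1 = g x.2 := by rwa [add_neg_eq_zero] at h
    rw [h2, add_neg_cancel]
  have key2 : ∀ (y : Q × P), g y.1 + -(f y.2) = 0 → f y.2 + -(g y.1) = 0 := by
    intro y h
    have h2 : g y.1 = f y.2 := by rwa [add_neg_eq_zero] at h
    rw [h2, add_neg_cancel]
  exact
    { toFun := fun z => ⟨(z.1.2, z.1.1), key z.1 z.2⟩
      invFun := fun z => ⟨(z.1.2, z.1.1), key2 z.1 z.2⟩
      left_inv := fun z => Subtype.ext rfl
      right_inv := fun z => Subtype.ext rfl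
      map_add' := fun x y => Subtype.ext rfl
      map_smul' := fun c x => Subtype.ext rfl }

theorem schanuel_one {M : ModuleCat.{u} R} {a b : ℕ} (f : (Fin a → R) →ₗ[R] ↥M)
    (hf : Function.Surjective f) (g : (Fin b → R) →ₗ[R] ↥M) (hg : Function.Surjective g) :
    Nonempty ((↥(LinearMap.ker f) × (Fin b → R)) ≃ₗ[R]
      (↥(LinearMap.ker g) × (Fin a → R))) := by
  obtain ⟨e1⟩ := splitHalf (R := R) f g hg
  obtain ⟨e2⟩ := splitHalf (R := R) g f hf
  exact ⟨(LinearEquiv.prodComm R _ _) ≪≫ₗ e2.symm ≪≫ₗ (kerSwap f g).symm ≪≫ₗ e1 ≪≫ₗ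
    (LinearEquiv.prodComm R _ _)⟩

theorem schanuel : ∀ (n : ℕ) {M K K' : ModuleCat.{u} R}, IsSyzygy R n K M →
    IsSyzygy R n K' M → ∃ c d : ℕ,
      Nonempty ((↥K × (Fin c → R)) ≃ₗ[R] (↥K' × (Fin d → R)))
  | 0, M, K, K', ⟨e⟩, ⟨e'⟩ =>
    ⟨0, 0, ⟨(prodZed K).symm ≪≫ₗ e ≪≫ₗ e'.symm ≪≫ₗ prodZed K'⟩⟩
  | n + 1, M, K, K', ⟨k, f, hf, hK⟩, ⟨k', f', hf', hK'⟩ => by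
    obtain ⟨Z, hZsyz, hZfree, _⟩ := isSyzygy_free (R := R) n k'
    obtain ⟨Z', hZ'syz, hZ'free, _⟩ := isSyzygy_free (R := R) n k
    obtain ⟨e0⟩ := schanuel_one f hf f' hf'
    have hPK : IsSyzygy R n (ModuleCat.of R (↥K × ↥Z))
        (ModuleCat.of R (↥(LinearMap.ker f) × (Fin k' → R))) := isSyzygy_prod hK hZsyz
    have hPK' : IsSyzygy R n (ModuleCat.of R (↥K' × ↥Z'))
        (ModuleCat.of R (↥(LinearMap.ker f) × (Fin k' → R))) :=
      isSyzygy_congr_right e0.symm (isSyzygy_prod hK' hZ'syz)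
    obtain ⟨c, d, ⟨e1⟩⟩ := schanuel n hPK hPK'
    obtain ⟨t, ⟨eZ⟩⟩ := hZfree c
    obtain ⟨t', ⟨eZ'⟩⟩ := hZ'free d
    exact ⟨t, t', ⟨(LinearEquiv.prodCongr (LinearEquiv.refl R ↥K) eZ.symm) ≪≫ₗ
      (LinearEquiv.prodAssoc R ↥K ↥Z (Fin c → R)).symm ≪≫ₗ e1 ≪≫ₗ
      (LinearEquiv.prodAssoc R ↥K' ↥Z' (Fin d → R)) ≪≫ₗ
      (LinearEquiv.prodCongr (LinearEquiv.refl R ↥K') eZ')⟩⟩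

theorem isSyzygy_summand [IsNoetherianRing R] {M B K : ModuleCat.{u} R} {m : ℕ}
    (hd : DirectSummand R M B) (hB : Module.Finite R ↥B) (hK : IsSyzygy R m K B) :
    ∃ (S : ModuleCat.{u} R) (a : ℕ), IsSyzygy R m S M ∧
      DirectSummand R S (ModuleCat.of R (↥K × (Fin a → R))) := by
  obtain ⟨s, r, hrs⟩ := hd
  have hrsurj : Function.Surjective r := by
    intro x
    exact ⟨s x, by simpa using LinearMap.congr_fun hrs x⟩
  have hMfin : Module.Finite R ↥M := Module.Finite.of_surjective r hrsurj
  have hNoeth : IsNoetherian R ↥B := isNoetherian_of_isNoetherianRing_of_finite R ↥B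
  have hWfin : Module.Finite R ↥(ModuleCat.of R (LinearMap.ker r)) :=
    Module.Finite.iff_fg.mpr (IsNoetherian.noetherian _)
  obtain ⟨SM, hSM⟩ := exists_syzygy m M hMfin
  obtain ⟨SW, hSW⟩ := exists_syzygy m (ModuleCat.of R (LinearMap.ker r)) hWfin
  have hprod : IsSyzygy R m (ModuleCat.of R (↥SM × ↥SW)) B :=
    isSyzygy_congr_right (splitEquiv s r hrs).symm (isSyzygy_prod hSM hSW)
  obtain ⟨c, d, ⟨e2⟩⟩ := schanuel m hprod hK
  refine ⟨SM, d, hSM, ds_trans (ds_prod_left SM SW) (ds_trans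
    (ds_prod_left (ModuleCat.of R (↥SM × ↥SW)) (Fr R c)) (ds_of_equiv e2))⟩

end Aux5
section Aux6
variable {R : Type u} [CommRing R]

/-- Horseshoe: syzygies of the outer terms of a ses assemble to a syzygy of the middle,
fitting in a ses. -/
theorem horseshoe : ∀ (m : ℕ) {A B C KA KC : ModuleCat.{u} R}, SES A B C →
    IsSyzygy R m KA A → IsSyzygy R m KC C →
    ∃ KB : ModuleCat.{u} R, IsSyzygy R m KB B ∧ SES KA KB KC
  | 0, A, B, C, KA, KC, hs, ⟨eA⟩, ⟨eC⟩ =>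
    ⟨B, isSyzygy_self B, ses_congr eA.symm (LinearEquiv.refl R ↥B) eC.symm hs⟩
  | m + 1, A, B, C, KA, KC, hs, ⟨a, fA, hfA, hKA⟩, ⟨c, fC, hfC, hKC⟩ => by
    obtain ⟨i, p, hi, hp, hk⟩ := hs
    obtain ⟨h, hh⟩ := free_lift' p hp fC
    have hph : ∀ v, p (h v) = fC v := fun v => LinearMap.congr_fun hh v
    have hpi : ∀ x, p (i x) = 0 := by
      intro x
      have : i x ∈ LinearMap.ker p := by rw [← hk]; exact ⟨x, rfl⟩
      exact this
    set fB : ((Fin a → R) × (Fin c → R)) →ₗ[R] ↥B := (i ∘ₗ fA).coprod h with hfBdef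
    have hfBapp : ∀ w : (Fin a → R) × (Fin c → R), fB w = i (fA w.1) + h w.2 :=
      fun w => rfl
    have hfBsurj : Function.Surjective fB := by
      intro b
      obtain ⟨v, hv⟩ := hfC (p b)
      have h0 : p (b - h v) = 0 := by rw [map_sub, hph, hv, sub_self]
      have hmem : b - h v ∈ LinearMap.range i := by rw [hk]; exact h0
      obtain ⟨a0, ha0⟩ := hmem
      obtain ⟨u, hu⟩ := hfA a0
      refine ⟨(u, v), ?_⟩
      rw [hfBapp, hu, ha0]
      abel
    -- maps between the kernels
    have hjmem : ∀ u : ↥(LinearMap.ker fA),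
        ((LinearMap.inl R (Fin a → R) (Fin c → R)) ∘ₗ (LinearMap.ker fA).subtype) u ∈
          LinearMap.ker fB := by
      intro u
      have hu : fA u.1 = 0 := u.2
      show fB (u.1, 0) = 0
      rw [hfBapp]
      simp [hu]
    have hqmem : ∀ w : ↥(LinearMap.ker fB),
        ((LinearMap.snd R (Fin a → R) (Fin c → R)) ∘ₗ (LinearMap.ker fB).subtype) w ∈
          LinearMap.ker fC := by
      intro w
      have hw : fB w.1 = 0 := w.2
      rw [hfBapp] at hw
      show fC w.1.2 = 0
      have h1 : h w.1.2 = -(i (fA w.1.1)) := eq_neg_of_add_eq_zero_right hw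
      rw [← hph, h1, map_neg, hpi, neg_zero]
    set jm : ↥(LinearMap.ker fA) →ₗ[R] ↥(LinearMap.ker fB) :=
      LinearMap.codRestrict _ _ hjmem with hjm
    set qm : ↥(LinearMap.ker fB) →ₗ[R] ↥(LinearMap.ker fC) :=
      LinearMap.codRestrict _ _ hqmem with hqm
    have hses : SES (ModuleCat.of R (LinearMap.ker fA)) (ModuleCat.of R (LinearMap.ker fB))
        (ModuleCat.of R (LinearMap.ker fC)) := by
      refine ⟨jm, qm, ?_, ?_, ?_⟩
      · intro x y hxy
        have := congrArg Subtype.val hxy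
        apply Subtype.ext
        exact congrArg Prod.fst this
      · intro v
        have hv : fC v.1 = 0 := v.2
        have h0 : p (h v.1) = 0 := by rw [hph, hv]
        have hmem : h v.1 ∈ LinearMap.range i := by rw [hk]; exact h0
        obtain ⟨a0, ha0⟩ := hmem
        obtain ⟨u, hu⟩ := hfA a0
        have hwmem : ((-u, v.1) : (Fin a → R) × (Fin c → R)) ∈ LinearMap.ker fB := by
          show fB (-u, v.1) = 0
          rw [hfBapp]
          simp only [map_neg, hu, ha0]
          abel
        exact ⟨⟨(-u, v.1), hwmem⟩, Subtype.ext rfl⟩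
      · ext w
        simp only [LinearMap.mem_range, LinearMap.mem_ker]
        constructor
        · rintro ⟨y, rfl⟩
          apply Subtype.ext
          rfl
        · intro hqw
          have h2 : w.1.2 = 0 := congrArg Subtype.val hqw
          have hw : fB w.1 = 0 := w.2
          rw [hfBapp, h2, map_zero, add_zero] at hw
          have h3 : fA w.1.1 = 0 := by
            apply hi
            rw [hw, map_zero]
          refine ⟨⟨w.1.1, h3⟩, Subtype.ext (Prod.ext rfl h2.symm)⟩

    obtain ⟨KB, hKB, hsesK⟩ := horseshoe m hses hKA hKC
    refine ⟨KB, ?_, hsesK⟩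
    refine ⟨a + c, fB ∘ₗ (frAppend (R := R) R a c).symm.toLinearMap,
      hfBsurj.comp (frAppend (R := R) R a c).symm.surjective, ?_⟩
    exact isSyzygy_congr_right
      (kerCompEquiv (R := R) (frAppend (R := R) R a c).symm fB).symm hKB

/-- Rotation: given a ses and a free cover of the quotient, rotate. -/
theorem ses_rotate {A B C : ModuleCat.{u} R} (hs : SES A B C) {c : ℕ}
    (f : (Fin c → R) →ₗ[R] ↥C) (hf : Function.Surjective f) :
    SES (ModuleCat.of R (LinearMap.ker f)) (ModuleCat.of R (↥A × (Fin c → R))) B := by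
  obtain ⟨i, p, hi, hp, hk⟩ := hs
  obtain ⟨h, hh⟩ := free_lift' p hp f
  have hph : ∀ v, p (h v) = f v := fun v => LinearMap.congr_fun hh v
  have hpi : ∀ x, p (i x) = 0 := by
    intro x
    have : i x ∈ LinearMap.ker p := by rw [← hk]; exact ⟨x, rfl⟩
    exact this
  set eqv := LinearEquiv.ofInjective i hi with heqv
  have hhmem : ∀ v : ↥(LinearMap.ker f), h v.1 ∈ LinearMap.range i := by
    intro v
    have hv : f v.1 = 0 := v.2
    rw [hk]
    show p (h v.1) = 0
    rw [hph, hv]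
  set cod : ↥(LinearMap.ker f) →ₗ[R] ↥(LinearMap.range i) :=
    LinearMap.codRestrict _ (h ∘ₗ (LinearMap.ker f).subtype) hhmem with hcod
  have hcodval : ∀ v : ↥(LinearMap.ker f), ((cod v) : ↥B) = h v.1 := fun v => rfl
  have hieqv : ∀ z : ↥(LinearMap.range i), i (eqv.symm z) = (z : ↥B) := by
    intro z
    have hA : (↑(eqv (eqv.symm z)) : ↥B) = (z : ↥B) :=
      congrArg Subtype.val (eqv.apply_symm_apply z)
    have hB : (↑(eqv (eqv.symm z)) : ↥B) = i (eqv.symm z) :=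
      LinearEquiv.ofInjective_apply i (eqv.symm z)
    rw [← hB, hA]
  set jmap : ↥(LinearMap.ker f) →ₗ[R] (↥A × (Fin c → R)) :=
    (-(eqv.symm.toLinearMap ∘ₗ cod)).prod (LinearMap.ker f).subtype with hjmap
  have hjapp : ∀ v : ↥(LinearMap.ker f), jmap v = (-(eqv.symm (cod v)), v.1) := fun v => rfl
  set φ : (↥A × (Fin c → R)) →ₗ[R] ↥B := i.coprod h with hφ
  have hφapp : ∀ w : ↥A × (Fin c → R), φ w = i w.1 + h w.2 := fun w => rfl
  refine ⟨jmap, φ, ?_, ?_, ?_⟩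
  · intro x y hxy
    apply Subtype.ext
    have := congrArg Prod.snd (hxy : jmap x = jmap y)
    exact this
  · intro b
    obtain ⟨v, hv⟩ := hf (p b)
    have h0 : p (b - h v) = 0 := by rw [map_sub, hph, hv, sub_self]
    have hmem : b - h v ∈ LinearMap.range i := by rw [hk]; exact h0
    obtain ⟨a0, ha0⟩ := hmem
    refine ⟨(a0, v), ?_⟩
    show i a0 + h v = b
    rw [ha0]
    abel
  · ext w
    simp only [LinearMap.mem_range, LinearMap.mem_ker]
    constructor
    · rintro ⟨v, rfl⟩
      show i (-(eqv.symm (cod v))) + h v.1 = 0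
      rw [map_neg, hieqv, hcodval]
      abel
    · intro hw
      have hw' : i w.1 + h w.2 = 0 := hw
      have h1 : h w.2 = -(i w.1) := eq_neg_of_add_eq_zero_right hw'
      have h2 : f w.2 = 0 := by
        rw [← hph, h1, map_neg, hpi, neg_zero]
      refine ⟨⟨w.2, h2⟩, ?_⟩
      have h3 : -(eqv.symm (cod ⟨w.2, h2⟩)) = w.1 := by
        apply hi
        rw [map_neg, hieqv, hcodval]
        show -(h w.2) = i w.1
        rw [h1, neg_neg]
      exact Prod.ext h3 rfl
  
/-- padding a 1-syzygy by a free module. -/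
theorem isSyzygy_pad {C : ModuleCat.{u} R} {c : ℕ} (f : (Fin c → R) →ₗ[R] ↥C)
    (hf : Function.Surjective f) (b : ℕ) :
    IsSyzygy R 1 (ModuleCat.of R (↥(ModuleCat.of R (LinearMap.ker f)) × (Fin b → R))) C := by
  set f2 : (Fin (c + b) → R) →ₗ[R] ↥C :=
    (f ∘ₗ LinearMap.fst R (Fin c → R) (Fin b → R)) ∘ₗ
      (frAppend (R := R) R c b).symm.toLinearMap with hf2
  have hf2surj : Function.Surjective f2 := by
    intro x
    obtain ⟨v, hv⟩ := hf x
    exact ⟨frAppend (R := R) R c b (v, 0), by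
      simp only [hf2, LinearMap.comp_apply, LinearEquiv.coe_coe, LinearEquiv.symm_apply_apply]
      exact hv⟩
  refine ⟨c + b, f2, hf2surj, ?_⟩
  refine ⟨(kerCompEquiv (R := R) (frAppend (R := R) R c b).symm
    (f ∘ₗ LinearMap.fst R (Fin c → R) (Fin b → R)) ≪≫ₗ kerCompFstEquiv (R := R) f).symm⟩

end Aux6
section Aux7
variable {R : Type u} [CommRing R]

/-- `Π i : Fin (t+1), φ i ≃ φ 0 × Π i : Fin t, φ i.succ`. -/
noncomputable def piSucc {t : ℕ} (φ : Fin (t + 1) → Type u) [∀ i, AddCommGroup (φ i)]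
    [∀ i, Module R (φ i)] :
    ((i : Fin (t + 1)) → φ i) ≃ₗ[R] (φ 0 × ((i : Fin t) → φ i.succ)) where
  toFun f := (f 0, fun i => f i.succ)
  invFun p := Fin.cases p.1 p.2
  left_inv f := by
    funext i
    induction i using Fin.cases <;> simp
  right_inv p := by
    refine Prod.ext (by simp) (funext fun i => by simp)
  map_add' f g := rfl
  map_smul' c f := rfl

theorem isSyzygy_subsingleton {n : ℕ} {K M : ModuleCat.{u} R} (hK : Subsingleton ↥K)
    (hM : Subsingleton ↥M) : IsSyzygy R n K M :=
  isSyzygy_congr_left (subsingletonLEquiv ↥K (Fin 0 → R)) (isSyzygy_zed n hM)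

theorem isSyzygy_pi {n : ℕ} : ∀ {t : ℕ} {K M : Fin t → ModuleCat.{u} R},
    (∀ i, IsSyzygy R n (K i) (M i)) →
    IsSyzygy R n (ModuleCat.of R ((i : Fin t) → ↥(K i)))
      (ModuleCat.of R ((i : Fin t) → ↥(M i))) := by
  intro t
  induction t with
  | zero =>
    intro K M h
    exact isSyzygy_subsingleton inferInstance inferInstance
  | succ t IH =>
    intro K M h
    have h0 := isSyzygy_prod (h 0) (IH (K := fun i => K i.succ) (M := fun i => M i.succ)
      (fun i => h i.succ))
    exact isSyzygy_congr_left (piSucc (R := R) (fun i => ↥(K i)))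
      (isSyzygy_congr_right (piSucc (R := R) (fun i => ↥(M i))).symm h0)

theorem inAdd_pi {D : ModuleCat.{u} R} : ∀ {t : ℕ} {M : Fin t → ModuleCat.{u} R},
    (∀ i, InAdd R D (M i)) → InAdd R D (ModuleCat.of R ((i : Fin t) → ↥(M i))) := by
  intro t
  induction t with
  | zero => intro M h; exact inAdd_zero inferInstance
  | succ t IH =>
    intro M h
    exact inAdd_of_equiv (piSucc (R := R) (fun i => ↥(M i)))
      (inAdd_prod (h 0) (IH (fun i => h i.succ)))

theorem ds_fin {M N : ModuleCat.{u} R} (hd : DirectSummand R M N) (hN : Module.Finite R ↥N) :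
    Module.Finite R ↥M := by
  obtain ⟨s, r, hrs⟩ := hd
  have hrsurj : Function.Surjective r := fun x =>
    ⟨s x, by simpa using LinearMap.congr_fun hrs x⟩
  exact Module.Finite.of_surjective r hrsurj

theorem fin_of_subsingleton {M : ModuleCat.{u} R} (h : Subsingleton ↥M) :
    Module.Finite R ↥M :=
  Module.Finite.of_surjective (0 : (Fin 0 → R) →ₗ[R] ↥M)
    (fun x => ⟨0, Subsingleton.elim _ _⟩)

theorem inAdd_fin {D M : ModuleCat.{u} R} (hD : Module.Finite R ↥D) (h : InAdd R D M) :
    Module.Finite R ↥M := by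
  obtain ⟨t, hd⟩ := h
  haveI := hD
  have : Module.Finite R (Fin t → ↥D) := Module.Finite.pi
  exact ds_fin hd this

theorem module_finite_of_ses {Y E X : ModuleCat.{u} R} (hs : SES Y E X)
    (hY : Module.Finite R ↥Y) (hX : Module.Finite R ↥X) : Module.Finite R ↥E := by
  obtain ⟨i, p, hi, hp, hk⟩ := hs
  rw [Module.finite_def]
  apply Submodule.fg_of_fg_map_of_fg_inf_ker p
  · rw [Submodule.map_top, LinearMap.range_eq_top.mpr hp]
    exact Module.finite_def.mp hX
  · rw [top_inf_eq, ← hk, ← Submodule.map_top]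
    exact Submodule.FG.map i (Module.finite_def.mp hY)

theorem extClos_fg {D : ModuleCat.{u} R} (hD : Module.Finite R ↥D) :
    ∀ (m : ℕ) {M : ModuleCat.{u} R}, ExtClos R D m M → Module.Finite R ↥M := by
  intro m
  induction m using Nat.strong_induction_on with
  | _ m IH =>
    intro M h
    match m with
    | 0 => exact fin_of_subsingleton h
    | 1 => exact inAdd_fin hD h
    | (m + 2) =>
      rw [extClos_two_iff] at h
      obtain ⟨W, X, Y, hs, hdisj⟩ := h
      have hY : Module.Finite R ↥Y := by
        rcases hdisj with ⟨hY, _⟩ | ⟨hY, _⟩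
        · exact IH (m + 1) (by omega) hY
        · exact inAdd_fin hD hY
      have hX : Module.Finite R ↥X := by
        rcases hdisj with ⟨_, hX⟩ | ⟨_, hX⟩
        · exact inAdd_fin hD hX
        · exact IH (m + 1) (by omega) hX
      have hmid := module_finite_of_ses hs hY hX
      exact ds_fin (ds_prod_left M W) hmid

theorem th_fg [IsNoetherianRing R] {G : ModuleCat.{u} R} (hG : Module.Finite R ↥G) :
    ∀ (n : ℕ) {M : ModuleCat.{u} R}, Th R G n M → Module.Finite R ↥M := by
  intro n
  induction n using Nat.strong_induction_on with
  | _ n IH =>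
    intro M h
    match n with
    | 0 => exact fin_of_subsingleton h
    | 1 => exact inAdd_fin hG h
    | (n + 2) =>
      obtain ⟨A, B, C, f, g, hi, hp, hk, hdisj⟩ := h
      rcases hdisj with ⟨hA, hB, hM⟩ | ⟨hA, hC, hM⟩ | ⟨hB, hC, hM⟩
      · have hBfin := IH (n + 1) (by omega) hB
        exact ds_fin hM (Module.Finite.of_surjective g hp)
      · have hAfin := IH (n + 1) (by omega) hA
        have hCfin := IH (n + 1) (by omega) hC
        exact ds_fin hM (module_finite_of_ses ⟨f, g, hi, hp, hk⟩ hAfin hCfin)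
      · have hBfin := IH (n + 1) (by omega) hB
        haveI := hBfin
        haveI : IsNoetherian R ↥B := isNoetherian_of_isNoetherianRing_of_finite R ↥B
        have hrange : Module.Finite R ↥(LinearMap.range f) :=
          Module.Finite.iff_fg.mpr (IsNoetherian.noetherian _)
        have hAfin : Module.Finite R ↥A :=
          Module.Finite.equiv (LinearEquiv.ofInjective f hi).symm
        exact ds_fin hM hAfin

/-- The shift lemma: replacing every module in `|D|_m` by a first syzygy lands in `|D'|_m`,
provided `D'` contains `R` and a first syzygy of `D`. -/
theorem extClos_shift [IsNoetherianRing R] {D D' KD : ModuleCat.{u} R}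
    (hDfin : Module.Finite R ↥D) (hR' : DirectSummand R (ModuleCat.of R R) D')
    (hKD1 : IsSyzygy R 1 KD D) (hKDadd : InAdd R D' KD) :
    ∀ (m : ℕ) {S : ModuleCat.{u} R}, ExtClos R D m S →
      ∃ S' : ModuleCat.{u} R, IsSyzygy R 1 S' S ∧ ExtClos R D' m S' := by
  intro m
  induction m using Nat.strong_induction_on with
  | _ m IH =>
    intro S h
    match m with
    | 0 =>
      refine ⟨Zed R, isSyzygy_zed 1 h, ?_⟩
      show Subsingleton ↥(Zed R)
      infer_instance
    | 1 =>
      obtain ⟨t, hd⟩ := h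
      have hKt : IsSyzygy R 1 (ModuleCat.of R ((_ : Fin t) → ↥KD))
          (ModuleCat.of R ((_ : Fin t) → ↥D)) := isSyzygy_pi (fun _ => hKD1)
      haveI := hDfin
      have hfin : Module.Finite R ↥(ModuleCat.of R ((_ : Fin t) → ↥D)) := Module.Finite.pi
      obtain ⟨S', a, hS'1, hS'ds⟩ := isSyzygy_summand hd hfin hKt
      exact ⟨S', hS'1, inAdd_of_ds hS'ds
        (inAdd_prod (inAdd_pi (fun _ => hKDadd)) (inAdd_free hR' a))⟩
    | (m + 2) =>
      rw [extClos_two_iff] at h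
      obtain ⟨W, X, Y, hs, hdisj⟩ := h
      have hYfin : Module.Finite R ↥Y := by
        rcases hdisj with ⟨hY, _⟩ | ⟨hY, _⟩
        · exact extClos_fg hDfin (m + 1) hY
        · exact inAdd_fin hDfin hY
      have hXfin : Module.Finite R ↥X := by
        rcases hdisj with ⟨_, hX⟩ | ⟨_, hX⟩
        · exact inAdd_fin hDfin hX
        · exact extClos_fg hDfin (m + 1) hX
      have hmidfin := module_finite_of_ses hs hYfin hXfin
      rcases hdisj with ⟨hY, hX⟩ | ⟨hY, hX⟩
      · obtain ⟨SY, hSY1, hSYe⟩ := IH (m + 1) (by omega) hY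
        obtain ⟨SX, hSX1, hSXe⟩ := IH 1 (by omega) hX
        obtain ⟨KB, hKB1, hKBses⟩ := horseshoe 1 hs hSY1 hSX1
        have hKBe : ExtClos R D' (m + 2) KB := extClos_glue 1 hKBses hSYe hSXe
        obtain ⟨S', a, hS'1, hS'ds⟩ :=
          isSyzygy_summand (ds_prod_left S W) hmidfin hKB1
        refine ⟨S', hS'1, extClos_summand hS'ds ?_⟩
        exact extClos_prod_inAdd (m + 1) hKBe (inAdd_free hR' a)
      · obtain ⟨SY, hSY1, hSYe⟩ := IH 1 (by omega) hY
        obtain ⟨SX, hSX1, hSXe⟩ := IH (m + 1) (by omega) hX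
        obtain ⟨KB, hKB1, hKBses⟩ := horseshoe 1 hs hSY1 hSX1
        have hKBe : ExtClos R D' (1 + (m + 1)) KB := extClos_glue (m + 1) hKBses hSYe hSXe
        rw [show 1 + (m + 1) = m + 2 by omega] at hKBe
        obtain ⟨S', a, hS'1, hS'ds⟩ :=
          isSyzygy_summand (ds_prod_left S W) hmidfin hKB1
        refine ⟨S', hS'1, extClos_summand hS'ds ?_⟩
        exact extClos_prod_inAdd (m + 1) hKBe (inAdd_free hR' a)

end Aux7
section Aux8
variable {R : Type u} [CommRing R]

theorem extClos_prod_inAdd' {D M F : ModuleCat.{u} R} {m : ℕ} (hm : 1 ≤ m)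
    (hM : ExtClos R D m M) (hF : InAdd R D F) :
    ExtClos R D m (ModuleCat.of R (↥M × ↥F)) := by
  obtain ⟨m', rfl⟩ := Nat.exists_eq_add_of_le hm
  rw [Nat.add_comm] at hM ⊢
  exact extClos_prod_inAdd m' hM hF

theorem ds_pi_coord {t : ℕ} (M : Fin t → ModuleCat.{u} R) (i : Fin t) :
    DirectSummand R (M i) (ModuleCat.of R ((j : Fin t) → ↥(M j))) := by
  refine ⟨LinearMap.single R (fun j => ↥(M j)) i, LinearMap.proj i, ?_⟩
  refine LinearMap.ext fun x => ?_
  show Pi.single (M := fun j => ↥(M j)) i x i = x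
  simp

/-- the generator `R ⊕ ⊕_{i<t} Ω i`. -/
def Cgen (Ω : ℕ → ModuleCat.{u} R) (t : ℕ) : ModuleCat.{u} R :=
  ModuleCat.of R (R × ((i : Fin t) → ↥(Ω i)))

theorem ds_cgen_R (Ω : ℕ → ModuleCat.{u} R) (t : ℕ) :
    DirectSummand R (ModuleCat.of R R) (Cgen Ω t) :=
  ds_prod_left (ModuleCat.of R R) (ModuleCat.of R ((i : Fin t) → ↥(Ω i)))

theorem cgen_fin {Ω : ℕ → ModuleCat.{u} R} (hΩfin : ∀ i, Module.Finite R ↥(Ω i)) (t : ℕ) :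
    Module.Finite R ↥(Cgen Ω t) := by
  haveI : ∀ i : Fin t, Module.Finite R ↥(Ω i) := fun i => hΩfin i
  haveI h2 : Module.Finite R ((i : Fin t) → ↥(Ω i)) := Module.Finite.pi
  haveI h1 : Module.Finite R R := Module.Finite.self R
  exact Module.Finite.prod

theorem inAdd_cgen_omega {Ω : ℕ → ModuleCat.{u} R} {t i : ℕ} (h : i < t) :
    InAdd R (Cgen Ω t) (Ω i) :=
  inAdd_of_ds (ds_trans (ds_pi_coord (fun j : Fin t => Ω j) ⟨i, h⟩)
    (ds_prod_right (ModuleCat.of R R) (ModuleCat.of R ((j : Fin t) → ↥(Ω j)))))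
    (inAdd_self _)

theorem inAdd_cgen_mono {Ω : ℕ → ModuleCat.{u} R} {t t' : ℕ} (h : t ≤ t') :
    InAdd R (Cgen Ω t') (Cgen Ω t) :=
  inAdd_prod (inAdd_of_ds (ds_cgen_R Ω t') (inAdd_self _))
    (inAdd_pi (fun i : Fin t => inAdd_cgen_omega (lt_of_lt_of_le i.2 h)))

/-- subsingleton kernel of the identity-like cover of `R`. -/
theorem proj0_surj : Function.Surjective (LinearMap.proj (R := R) (φ := fun _ : Fin 1 => R) 0) :=
  fun x => ⟨fun _ => x, rfl⟩

theorem proj0_ker_subsingleton :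
    Subsingleton ↥(LinearMap.ker (LinearMap.proj (R := R) (φ := fun _ : Fin 1 => R) 0)) := by
  constructor
  intro a b
  apply Subtype.ext
  funext j
  have hj : j = 0 := Subsingleton.elim j 0
  have ha : a.1 0 = 0 := a.2
  have hb : b.1 0 = 0 := b.2
  rw [hj, ha, hb]

/-- The key shift: a first syzygy of any module of `|Cgen t|_m` lies in `|Cgen (t+1)|_m`. -/
theorem cgen_shift [IsNoetherianRing R] {G : ModuleCat.{u} R} {Ω : ℕ → ModuleCat.{u} R}
    (hΩ : ∀ i, IsSyzygy R i (Ω i) G) (hΩfin : ∀ i, Module.Finite R ↥(Ω i)) (t : ℕ)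
    {m : ℕ} {S : ModuleCat.{u} R} (h : ExtClos R (Cgen Ω t) m S) :
    ∃ S' : ModuleCat.{u} R, IsSyzygy R 1 S' S ∧ ExtClos R (Cgen Ω (t + 1)) m S' := by
  -- covers of each Ω i
  have hcov : ∀ i : Fin t, ∃ (c : ℕ) (f : (Fin c → R) →ₗ[R] ↥(Ω i)), Function.Surjective f :=
    fun i => Module.Finite.exists_fin' R ↥(Ω i)
  choose cs fs hfs using hcov
  set Ks : Fin t → ModuleCat.{u} R := fun i => ModuleCat.of R (LinearMap.ker (fs i)) with hKs
  have hKs1 : ∀ i, IsSyzygy R 1 (Ks i) (Ω i) := fun i => ⟨cs i, fs i, hfs i, isSyzygy_self _⟩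
  have hKsadd : ∀ i : Fin t, InAdd R (Cgen Ω (t + 1)) (Ks i) := by
    intro i
    have hsyz : IsSyzygy R ((i : ℕ) + 1) (Ks i) G := by
      have := isSyzygy_comp (hKs1 i) (hΩ i)
      rwa [Nat.add_comm] at this
    obtain ⟨c, d, ⟨e⟩⟩ := schanuel ((i : ℕ) + 1) hsyz (hΩ ((i : ℕ) + 1))
    refine inAdd_of_ds (ds_trans (ds_prod_left (Ks i) (Fr R c))
      (ds_of_equiv (M := ModuleCat.of R (↥(Ks i) × ↥(Fr R c)))
        (N := ModuleCat.of R (↥(Ω ((i : ℕ) + 1)) × ↥(Fr R d))) e)) ?_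
    exact inAdd_prod (inAdd_cgen_omega (by omega)) (inAdd_free (ds_cgen_R Ω (t + 1)) d)
  set KR : ModuleCat.{u} R :=
    ModuleCat.of R (LinearMap.ker (LinearMap.proj (R := R) (φ := fun _ : Fin 1 => R) 0)) with hKR
  have hKR1 : IsSyzygy R 1 KR (ModuleCat.of R R) := ⟨1, _, proj0_surj (R := R), isSyzygy_self _⟩
  set KD : ModuleCat.{u} R := ModuleCat.of R (↥KR × ((i : Fin t) → ↥(Ks i))) with hKD
  have hKD1 : IsSyzygy R 1 KD (Cgen Ω t) := isSyzygy_prod hKR1 (isSyzygy_pi hKs1)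
  have hKDadd : InAdd R (Cgen Ω (t + 1)) KD :=
    inAdd_prod (inAdd_zero proj0_ker_subsingleton) (inAdd_pi hKsadd)
  exact extClos_shift (cgen_fin hΩfin t) (ds_cgen_R Ω (t + 1)) hKD1 hKDadd m h

end Aux8
section Main
variable {R : Type u} [CommRing R]

theorem key_induction [IsNoetherianRing R] {G : ModuleCat.{u} R} (hGfin : Module.Finite R ↥G)
    {Ω : ℕ → ModuleCat.{u} R} (hΩ : ∀ i, IsSyzygy R i (Ω i) G)
    (hΩfin : ∀ i, Module.Finite R ↥(Ω i)) :
    ∀ (k : ℕ) {M : ModuleCat.{u} R}, Th R G (k + 1) M →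
      ∃ S : ModuleCat.{u} R, IsSyzygy R k S M ∧ ExtClos R (Cgen Ω (2 * k + 1)) (2 ^ k) S := by
  intro k
  induction k with
  | zero =>
    intro M h
    refine ⟨M, isSyzygy_self M, ?_⟩
    show InAdd R (Cgen Ω 1) M
    obtain ⟨e⟩ := hΩ 0
    exact inAdd_mono (inAdd_of_equiv e.symm (inAdd_cgen_omega (by omega))) h
  | succ k IH =>
    intro M h
    obtain ⟨A, B, C, f, g, hfi, hgs, hrk, hdisj⟩ := h
    have hses : SES A B C := ⟨f, g, hfi, hgs, hrk⟩
    have harith : 2 ^ k + 2 ^ k = 2 ^ (k + 1) := by rw [pow_succ, Nat.mul_two]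
    have hone : 1 ≤ 2 ^ k := Nat.one_le_pow k 2 (by omega)
    have hone' : 1 ≤ 2 ^ (k + 1) := Nat.one_le_pow _ 2 (by omega)
    set t := 2 * k + 1 with ht
    have htg : 2 * (k + 1) + 1 = t + 2 := by omega
    rcases hdisj with ⟨hA, hB, hM⟩ | ⟨hA, hC, hM⟩ | ⟨hB, hC, hM⟩
    · -- quotient case : A, B ∈ th, M is a summand of C
      have hAfin := th_fg hGfin (k + 1) hA
      have hBfin := th_fg hGfin (k + 1) hB
      haveI := hBfin
      have hCfin : Module.Finite R ↥C := Module.Finite.of_surjective g hgs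
      obtain ⟨c1, f1, hf1⟩ := Module.Finite.exists_fin' R ↥C
      have hses1 : SES (ModuleCat.of R (LinearMap.ker f1))
          (ModuleCat.of R (↥A × (Fin c1 → R))) B := ses_rotate hses f1 hf1
      obtain ⟨c2, f2, hf2⟩ := Module.Finite.exists_fin' R ↥B
      have hses2 : SES (ModuleCat.of R (LinearMap.ker f2))
          (ModuleCat.of R (↥(ModuleCat.of R (LinearMap.ker f1)) × (Fin c2 → R)))
          (ModuleCat.of R (↥A × (Fin c1 → R))) := ses_rotate hses1 f2 hf2
      have hK2fin : Module.Finite R ↥(ModuleCat.of R (LinearMap.ker f2)) := by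
        haveI : IsNoetherian R (Fin c2 → R) := inferInstance
        exact Module.Finite.iff_fg.mpr (IsNoetherian.noetherian _)
      obtain ⟨S₂, hS₂⟩ := exists_syzygy k _ hK2fin
      obtain ⟨SA, hSA, hSAe⟩ := IH hA
      obtain ⟨Z, hZ, hZp, hZadd⟩ := isSyzygy_free (R := R) k c1
      have hSAZ : IsSyzygy R k (ModuleCat.of R (↥SA × ↥Z))
          (ModuleCat.of R (↥A × (Fin c1 → R))) := isSyzygy_prod hSA hZ
      have hSAZe : ExtClos R (Cgen Ω t) (2 ^ k) (ModuleCat.of R (↥SA × ↥Z)) :=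
        extClos_prod_inAdd' hone hSAe (hZadd _ (ds_cgen_R Ω t))
      obtain ⟨KE, hKE, hKEses⟩ := horseshoe k hses2 hS₂ hSAZ
      have hS₂B : IsSyzygy R (k + 1) S₂ B :=
        isSyzygy_comp hS₂ ⟨c2, f2, hf2, isSyzygy_self _⟩
      obtain ⟨SB, hSB, hSBe⟩ := IH hB
      obtain ⟨SB', hSB'1, hSB'e⟩ := cgen_shift hΩ hΩfin t hSBe
      have hSB'B : IsSyzygy R (k + 1) SB' B := by
        have := isSyzygy_comp hSB'1 hSB
        rwa [Nat.add_comm] at this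
      obtain ⟨cc, dd, ⟨eS⟩⟩ := schanuel (k + 1) hS₂B hSB'B
      have hS₂e : ExtClos R (Cgen Ω (t + 1)) (2 ^ k) S₂ :=
        extClos_summand (ds_trans (ds_prod_left S₂ (Fr R cc))
          (ds_of_equiv (M := ModuleCat.of R (↥S₂ × ↥(Fr R cc)))
            (N := ModuleCat.of R (↥SB' × ↥(Fr R dd))) eS))
          (extClos_prod_inAdd' hone hSB'e (inAdd_free (ds_cgen_R Ω (t + 1)) dd))
      have hKEe : ExtClos R (Cgen Ω (t + 1)) (2 ^ k + 2 ^ k) KE :=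
        extClos_glue (2 ^ k) hKEses hS₂e
          (extClos_mono_gen (inAdd_cgen_mono (Nat.le_succ t)) (2 ^ k) hSAZe)
      rw [harith] at hKEe
      have hpad : IsSyzygy R 1
          (ModuleCat.of R (↥(ModuleCat.of R (LinearMap.ker f1)) × (Fin c2 → R))) C :=
        isSyzygy_pad f1 hf1 c2
      have hKEC : IsSyzygy R (k + 1) KE C := isSyzygy_comp hKE hpad
      obtain ⟨S, a, hS, hSds⟩ := isSyzygy_summand hM hCfin hKEC
      refine ⟨S, hS, ?_⟩
      have hfinal : ExtClos R (Cgen Ω (t + 1)) (2 ^ (k + 1)) S :=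
        extClos_summand hSds
          (extClos_prod_inAdd' hone' hKEe (inAdd_free (ds_cgen_R Ω (t + 1)) a))
      exact extClos_mono_gen (inAdd_cgen_mono (by omega)) _ hfinal
    · -- extension case : A, C ∈ th, M is a summand of B
      obtain ⟨SA, hSA, hSAe⟩ := IH hA
      obtain ⟨SC, hSC, hSCe⟩ := IH hC
      obtain ⟨KB, hKB, hKBses⟩ := horseshoe k hses hSA hSC
      have hKBe : ExtClos R (Cgen Ω t) (2 ^ k + 2 ^ k) KB :=
        extClos_glue (2 ^ k) hKBses hSAe hSCe
      obtain ⟨KB', hKB'1, hKB'e⟩ := cgen_shift hΩ hΩfin t hKBe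
      rw [harith] at hKB'e
      have hKB'B : IsSyzygy R (k + 1) KB' B := by
        have := isSyzygy_comp hKB'1 hKB
        rwa [Nat.add_comm] at this
      have hBfin := module_finite_of_ses hses (th_fg hGfin (k + 1) hA) (th_fg hGfin (k + 1) hC)
      obtain ⟨S, a, hS, hSds⟩ := isSyzygy_summand hM hBfin hKB'B
      refine ⟨S, hS, ?_⟩
      have hfinal : ExtClos R (Cgen Ω (t + 1)) (2 ^ (k + 1)) S :=
        extClos_summand hSds
          (extClos_prod_inAdd' hone' hKB'e (inAdd_free (ds_cgen_R Ω (t + 1)) a))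
      exact extClos_mono_gen (inAdd_cgen_mono (by omega)) _ hfinal
    · -- sub case : B, C ∈ th, M is a summand of A
      have hBfin := th_fg hGfin (k + 1) hB
      have hCfin := th_fg hGfin (k + 1) hC
      have hAfin : Module.Finite R ↥A := by
        haveI := hBfin
        haveI : IsNoetherian R ↥B := isNoetherian_of_isNoetherianRing_of_finite R ↥B
        have hrange : Module.Finite R ↥(LinearMap.range f) :=
          Module.Finite.iff_fg.mpr (IsNoetherian.noetherian _)
        exact Module.Finite.equiv (LinearEquiv.ofInjective f hfi).symm
      obtain ⟨c1, f1, hf1⟩ := Module.Finite.exists_fin' R ↥C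
      have hses1 : SES (ModuleCat.of R (LinearMap.ker f1))
          (ModuleCat.of R (↥A × (Fin c1 → R))) B := ses_rotate hses f1 hf1
      have hK1fin : Module.Finite R ↥(ModuleCat.of R (LinearMap.ker f1)) := by
        haveI : IsNoetherian R (Fin c1 → R) := inferInstance
        exact Module.Finite.iff_fg.mpr (IsNoetherian.noetherian _)
      obtain ⟨S₁, hS₁⟩ := exists_syzygy k _ hK1fin
      have hS₁C : IsSyzygy R (k + 1) S₁ C := isSyzygy_comp hS₁ ⟨c1, f1, hf1, isSyzygy_self _⟩
      obtain ⟨SC, hSC, hSCe⟩ := IH hC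
      obtain ⟨SC', hSC'1, hSC'e⟩ := cgen_shift hΩ hΩfin t hSCe
      have hSC'C : IsSyzygy R (k + 1) SC' C := by
        have := isSyzygy_comp hSC'1 hSC
        rwa [Nat.add_comm] at this
      obtain ⟨cc, dd, ⟨eS⟩⟩ := schanuel (k + 1) hS₁C hSC'C
      have hS₁e : ExtClos R (Cgen Ω (t + 1)) (2 ^ k) S₁ :=
        extClos_summand (ds_trans (ds_prod_left S₁ (Fr R cc))
          (ds_of_equiv (M := ModuleCat.of R (↥S₁ × ↥(Fr R cc)))
            (N := ModuleCat.of R (↥SC' × ↥(Fr R dd))) eS))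
          (extClos_prod_inAdd' hone hSC'e (inAdd_free (ds_cgen_R Ω (t + 1)) dd))
      obtain ⟨SB, hSB, hSBe⟩ := IH hB
      obtain ⟨KE, hKE, hKEses⟩ := horseshoe k hses1 hS₁ hSB
      have hKEe : ExtClos R (Cgen Ω (t + 1)) (2 ^ k + 2 ^ k) KE :=
        extClos_glue (2 ^ k) hKEses hS₁e
          (extClos_mono_gen (inAdd_cgen_mono (Nat.le_succ t)) (2 ^ k) hSBe)
      rw [harith] at hKEe
      obtain ⟨KE', hKE'1, hKE'e⟩ := cgen_shift hΩ hΩfin (t + 1) hKEe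
      have hKE'syz : IsSyzygy R (k + 1) KE' (ModuleCat.of R (↥A × (Fin c1 → R))) := by
        have := isSyzygy_comp hKE'1 hKE
        rwa [Nat.add_comm] at this
      haveI := hAfin
      haveI : Module.Finite R (Fin c1 → R) := Module.Finite.pi
      have hAFfin : Module.Finite R ↥(ModuleCat.of R (↥A × (Fin c1 → R))) :=
        Module.Finite.prod
      obtain ⟨S, a, hS, hSds⟩ := isSyzygy_summand
        (ds_trans hM (ds_prod_left A (Fr R c1))) hAFfin hKE'syz
      refine ⟨S, hS, ?_⟩
      have hfinal : ExtClos R (Cgen Ω (t + 1 + 1)) (2 ^ (k + 1)) S :=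
        extClos_summand hSds
          (extClos_prod_inAdd' hone' hKE'e (inAdd_free (ds_cgen_R Ω (t + 1 + 1)) a))
      exact extClos_mono_gen (inAdd_cgen_mono (by omega)) _ hfinal

end Main
/-- If `M ∈ th^{n+1}(G)`, then some `n`-th syzygy `Ωⁿ M` lies in `|C|_{2ⁿ}` where
`C = R ⊕ ⊕_{i=0}^{2n} Ωⁱ G`. -/
theorem th_to_extClos_syzygy [IsNoetherianRing R] (G M : ModuleCat.{u} R)
    [Module.Finite R G] [Module.Finite R M] (n : ℕ)
    (hM : Th R G (n + 1) M) :
    ∃ Ω : Fin (2 * n + 1) → ModuleCat.{u} R,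
      (∀ i : Fin (2 * n + 1), IsSyzygy R i (Ω i) G) ∧
      ∃ S : ModuleCat.{u} R, IsSyzygy R n S M ∧
        ExtClos R (ModuleCat.of R (R × ((i : Fin (2 * n + 1)) → Ω i))) (2 ^ n) S := by
  have hGfin : Module.Finite R ↥G := inferInstance
  have hEx : ∀ i : ℕ, ∃ K : ModuleCat.{u} R, IsSyzygy R i K G :=
    fun i => exists_syzygy i G hGfin
  choose Ω hΩ using hEx
  have hΩfin : ∀ i, Module.Finite R ↥(Ω i) :=
    fun i => module_finite_of_isSyzygy (hΩ i) hGfin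
  obtain ⟨S, hS, hSe⟩ := key_induction hGfin hΩ hΩfin n hM
  exact ⟨fun i => Ω i, fun i => hΩ i, S, hS, hSe⟩
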